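/- Let F₀ be the distribution on [0,∞) of ξ = η(1+U), where U is uniform on (0,1) independent of η, P(η = aₙ) = C aₙ^{-α} with aₙ = a^{rⁿ}, r = 1 + 1/α, α ∈ (3/2, (√5+1)/2), a > 1 with a^r > 8a, and C the normalizing constant. Then F₀ has finite mean, F₀ ∉ L (since F̄₀(2aₙ - 1)/F̄₀(2aₙ) = 2 for large n), and F₀ ∈ OS. -/

import Mathlib

open MeasureTheory Filter Set Asymptotics
open scoped ENNReal NNReal

/-- The tail `F̄(x) = μ((x,∞))` of a distribution `μ` on `ℝ`. -/
noncomputable def tail (μ : MeasureTheory.Measure ℝ) (x : ℝ) : ℝ := (μ (Set.Ioi x)).toReal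

/-- Convolution of two distributions on `ℝ`. -/
noncomputable def mconv (μ ν : MeasureTheory.Measure ℝ) : MeasureTheory.Measure ℝ :=
  MeasureTheory.Measure.map (fun p : ℝ × ℝ => p.1 + p.2) (μ.prod ν)

/-- `iconv μ k` is the `k`-fold convolution `μ^{*k}` (with `μ^{*0} = δ₀`). -/
noncomputable def iconv (μ : MeasureTheory.Measure ℝ) : ℕ → MeasureTheory.Measure ℝ
  | 0 => MeasureTheory.Measure.dirac 0
  | n + 1 => mconv (iconv μ n) μ

/-- The class `L(γ)`: `F̄(x-t) ~ e^{γt} F̄(x)` as `x → ∞`, for every `t`. -/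
def MemL (γ : ℝ) (μ : MeasureTheory.Measure ℝ) : Prop :=
  ∀ t : ℝ, Filter.Tendsto (fun x => tail μ (x - t) / tail μ x) Filter.atTop
    (nhds (Real.exp (γ * t)))

/-- The class `OS`: `limsup_{x→∞} (F*F)̄(x) / F̄(x) < ∞`. -/
def MemOS (μ : MeasureTheory.Measure ℝ) : Prop :=
  Filter.IsBoundedUnder (· ≤ ·) Filter.atTop (fun x => tail (mconv μ μ) x / tail μ x)

namespace Stmt19Aux

open Real

noncomputable def aa (a α : ℝ) (n : ℕ) : ℝ := a ^ ((1 + 1/α) ^ n)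

noncomputable def SS (a α : ℝ) (n : ℕ) : ℝ := ∑' i : ℕ, aa a α (n + i) ^ (-α)

noncomputable def CC (a α : ℝ) : ℝ := (SS a α 0)⁻¹

structure H (α a : ℝ) : Prop where
  hα : 3/2 < α
  ha : 1 < a
  ha' : 8 * a < a ^ (1 + 1/α)

namespace H
variable {α a : ℝ}

lemma αpos (h : H α a) : 0 < α := lt_trans (by norm_num) h.hα
lemma α1 (h : H α a) : 1 < α := lt_trans (by norm_num) h.hα
lemma apos (h : H α a) : 0 < a := lt_trans one_pos h.ha
lemma expos (h : H α a) (n : ℕ) : 0 < (1 + 1/α) ^ n := pow_pos (by have := h.αpos; positivity) n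
lemma aa_pos (h : H α a) (n : ℕ) : 0 < aa a α n := rpow_pos_of_pos h.apos _
lemma aa_gt_one (h : H α a) (n : ℕ) : 1 < aa a α n := one_lt_rpow h.ha (h.expos n)
lemma aa_zero (h : H α a) : aa a α 0 = a := by simp [aa]
lemma aa_ge_a (h : H α a) (n : ℕ) : a ≤ aa a α n := by
  have h1 : (1:ℝ) ≤ (1 + 1/α) ^ n := one_le_pow₀ (by
    have := h.αpos
    have h0 : 0 < 1/α := by positivity
    linarith)
  calc a = a ^ (1:ℝ) := (rpow_one a).symm
  _ ≤ aa a α n := rpow_le_rpow_of_exponent_le h.ha.le h1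
lemma a_rt (h : H α a) : 8 < a ^ (1/α) := by
  have h1 : a ^ ((1:ℝ) + 1/α) = a * a ^ (1/α) := by
    rw [rpow_add h.apos, rpow_one]
  have h2 : a * 8 < a * a ^ (1/α) := by rw [← h1]; linarith [h.ha']
  exact lt_of_mul_lt_mul_left h2 h.apos.le
lemma aa_succ (h : H α a) (n : ℕ) : aa a α (n+1) = aa a α n ^ ((1:ℝ) + 1/α) := by
  rw [aa, aa, pow_succ, rpow_mul h.apos.le]
lemma aa8 (h : H α a) (n : ℕ) : 8 * aa a α n < aa a α (n+1) := by
  have h1 : aa a α (n+1) = aa a α n * aa a α n ^ (1/α) := by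
    rw [h.aa_succ n, rpow_add (h.aa_pos n), rpow_one]
  have h2 : a ^ (1/α) ≤ aa a α n ^ (1/α) :=
    rpow_le_rpow h.apos.le (h.aa_ge_a n) (by have := h.αpos; positivity)
  have h3 : 8 < aa a α n ^ (1/α) := lt_of_lt_of_le h.a_rt h2
  calc 8 * aa a α n = aa a α n * 8 := by ring
  _ < aa a α n * aa a α n ^ (1/α) := by
      exact mul_lt_mul_of_pos_left h3 (h.aa_pos n)
  _ = aa a α (n+1) := h1.symm
lemma aa_lt (h : H α a) (n : ℕ) : aa a α n < aa a α (n+1) :=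
  lt_of_lt_of_le (by nlinarith [h.aa_pos n]) (h.aa8 n).le
lemma aa_monotone (h : H α a) : Monotone (aa a α) := monotone_nat_of_le_succ (fun n => (h.aa_lt n).le)
lemma aa_ge_8pow (h : H α a) (n : ℕ) : (8:ℝ)^n ≤ aa a α n := by
  induction n with
  | zero => simpa [h.aa_zero] using h.ha.le
  | succ n ih =>
    calc (8:ℝ)^(n+1) = 8 * 8^n := by ring
    _ ≤ 8 * aa a α n := by linarith
    _ ≤ aa a α (n+1) := (h.aa8 n).le
lemma aa_8i (h : H α a) (n i : ℕ) : (8:ℝ)^i * aa a α n ≤ aa a α (n+i) := by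
  induction i with
  | zero => simp
  | succ i ih =>
    calc (8:ℝ)^(i+1) * aa a α n = 8 * ((8:ℝ)^i * aa a α n) := by ring
    _ ≤ 8 * aa a α (n+i) := by nlinarith
    _ ≤ aa a α (n+i+1) := (h.aa8 (n+i)).le

lemma pow8_neg (h : H α a) (i : ℕ) : ((8:ℝ)^i) ^ (-α) = ((8:ℝ)^(-α))^i := by
  rw [← rpow_natCast (8:ℝ) i, ← rpow_mul (by norm_num), mul_comm,
    rpow_mul (by norm_num : (0:ℝ) ≤ 8), rpow_natCast]

lemma tb (h : H α a) (n i : ℕ) : aa a α (n+i) ^ (-α) ≤ (1/8)^i * aa a α n ^ (-α) := by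
  have h0 : (0:ℝ) < (8:ℝ)^i * aa a α n := mul_pos (by positivity) (h.aa_pos n)
  have h1 : aa a α (n+i) ^ (-α) ≤ ((8:ℝ)^i * aa a α n) ^ (-α) :=
    rpow_le_rpow_of_nonpos h0 (h.aa_8i n i) (by linarith [h.αpos])
  have h2 : ((8:ℝ)^i * aa a α n) ^ (-α) = ((8:ℝ)^i)^(-α) * aa a α n ^ (-α) :=
    mul_rpow (by positivity) (h.aa_pos n).le
  have h3 : ((8:ℝ)^i)^(-α) ≤ (1/8:ℝ)^i := by
    rw [h.pow8_neg i]
    apply pow_le_pow_left₀ (rpow_nonneg (by norm_num) _)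
    calc (8:ℝ)^(-α) ≤ (8:ℝ)^(-1:ℝ) :=
      rpow_le_rpow_of_exponent_le (by norm_num) (by linarith [h.α1])
    _ = 1/8 := by rw [rpow_neg_one]; norm_num
  calc aa a α (n+i) ^ (-α) ≤ ((8:ℝ)^i)^(-α) * aa a α n ^ (-α) := by rw [← h2]; exact h1
  _ ≤ (1/8)^i * aa a α n ^ (-α) := by
      apply mul_le_mul_of_nonneg_right h3 (rpow_nonneg (h.aa_pos n).le _)

lemma sum_tb (h : H α a) (n : ℕ) : Summable (fun i => aa a α (n+i) ^ (-α)) := by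
  apply Summable.of_nonneg_of_le (fun i => rpow_nonneg (h.aa_pos _).le _) (h.tb n)
  exact (summable_geometric_of_lt_one (by norm_num) (by norm_num)).mul_right _

lemma SS_le (h : H α a) (n : ℕ) : SS a α n ≤ 2 * aa a α n ^ (-α) := by
  have h1 : SS a α n ≤ ∑' i : ℕ, (1/8:ℝ)^i * aa a α n ^ (-α) :=
    Summable.tsum_le_tsum (h.tb n) (h.sum_tb n)
      ((summable_geometric_of_lt_one (by norm_num) (by norm_num)).mul_right _)
  have h2 : ∑' i : ℕ, (1/8:ℝ)^i * aa a α n ^ (-α)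
      = (1 - 1/8 : ℝ)⁻¹ * aa a α n ^ (-α) := by
    rw [tsum_mul_right, tsum_geometric_of_lt_one (by norm_num) (by norm_num)]
  have h3 : (0:ℝ) ≤ aa a α n ^ (-α) := rpow_nonneg (h.aa_pos n).le _
  rw [h2] at h1
  nlinarith
lemma SS_ge (h : H α a) (n : ℕ) : aa a α n ^ (-α) ≤ SS a α n := by
  have := Summable.le_tsum (h.sum_tb n) 0 (fun i _ => rpow_nonneg (h.aa_pos _).le _)
  simpa [SS] using this
lemma SS_pos (h : H α a) (n : ℕ) : 0 < SS a α n :=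
  lt_of_lt_of_le (rpow_pos_of_pos (h.aa_pos n) _) (h.SS_ge n)
lemma SS_rec (h : H α a) (n : ℕ) : SS a α n = aa a α n ^ (-α) + SS a α (n+1) := by
  rw [SS, Summable.tsum_eq_zero_add (h.sum_tb n)]
  congr 1
  exact tsum_congr fun i => by rw [show n+(i+1) = n+1+i from by omega]
lemma SS_anti (h : H α a) : Antitone (SS a α) := by
  apply antitone_nat_of_succ_le
  intro n
  rw [h.SS_rec n]
  have := rpow_nonneg (h.aa_pos n).le (-α)
  linarith
lemma keyid (h : H α a) (n : ℕ) : aa a α (n+1) ^ (-α) = aa a α n ^ (-(α+1)) := by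
  rw [h.aa_succ n, ← rpow_mul (h.aa_pos n).le]
  congr 1
  have hα0 : α ≠ 0 := ne_of_gt h.αpos
  field_simp
lemma aan_mul (h : H α a) (n : ℕ) : aa a α n ^ (-(α+1)) * aa a α n = aa a α n ^ (-α) := by
  have he : -(α+1)+1 = -α := by ring
  rw [← he, Real.rpow_add_one (ne_of_gt (h.aa_pos n))]
lemma mul_negpow (h : H α a) (n : ℕ) : aa a α n * aa a α n ^ (-α) = aa a α n ^ (1-α) := by
  have he : (1:ℝ) + -α = 1-α := by ring
  rw [← he, Real.rpow_add (h.aa_pos n), rpow_one]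

end H


lemma H.CC_pos (h : H α a) : 0 < CC a α := inv_pos.2 (h.SS_pos 0)
lemma H.CC_SS0 (h : H α a) : CC a α * SS a α 0 = 1 := inv_mul_cancel₀ (ne_of_gt (h.SS_pos 0))

lemma tail_nonneg (μ : Measure ℝ) (x : ℝ) : 0 ≤ tail μ x := ENNReal.toReal_nonneg

lemma tail_anti (μ : Measure ℝ) [IsFiniteMeasure μ] : Antitone (tail μ) :=
  fun _ _ hxy => ENNReal.toReal_mono (measure_ne_top μ _)
    (measure_mono (Ioi_subset_Ioi hxy))

lemma meas_Ioi (μ : Measure ℝ) [IsFiniteMeasure μ] (x : ℝ) :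
    μ (Set.Ioi x) = ENNReal.ofReal (tail μ x) :=
  (ENNReal.ofReal_toReal (measure_ne_top μ _)).symm

def TailFacts (α a : ℝ) (μ : Measure ℝ) : Prop :=
  (∀ x : ℝ, x < a → tail μ x = 1) ∧
  (∀ n : ℕ, ∀ x : ℝ, aa a α n ≤ x → x < aa a α (n+1) →
    tail μ x = CC a α * SS a α (n+1)
      + CC a α * aa a α n ^ (-(α+1)) * max (2*aa a α n - x) 0)

lemma locator (h : H α a) : ∀ x : ℝ, a ≤ x → ∃ n, aa a α n ≤ x ∧ x < aa a α (n+1) := by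
  intro x hx
  obtain ⟨m, hm⟩ := pow_unbounded_of_one_lt x (by norm_num : (1:ℝ) < 8)
  have hex : ∃ m, x < aa a α (m+1) :=
    ⟨m, lt_of_lt_of_le hm ((h.aa_ge_8pow m).trans (h.aa_lt m).le)⟩
  refine ⟨Nat.find hex, ?_, Nat.find_spec hex⟩
  rcases hn : Nat.find hex with _ | k
  · rw [h.aa_zero]; exact hx
  · have hk := Nat.find_min hex (show k < Nat.find hex by omega)
    push_neg at hk
    exact hk

lemma cPnonneg (h : H α a) (n : ℕ) : 0 ≤ CC a α * aa a α n ^ (-(α+1)) :=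
  mul_nonneg h.CC_pos.le (Real.rpow_nonneg (h.aa_pos n).le _)

lemma tail_lb (h : H α a) (ht : TailFacts α a μ) :
    ∀ n : ℕ, ∀ x : ℝ, x < aa a α (n+1) → CC a α * SS a α (n+1) ≤ tail μ x := by
  intro n x hxn
  rcases lt_or_ge x a with hxa | hxa
  · rw [ht.1 x hxa, ← h.CC_SS0]
    exact mul_le_mul_of_nonneg_left (h.SS_anti (Nat.zero_le _)) h.CC_pos.le
  · obtain ⟨m, hm1, hm2⟩ := locator h x hxa
    rw [ht.2 m x hm1 hm2]
    have hmn : m ≤ n := by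
      by_contra hc
      push_neg at hc
      exact absurd (lt_of_le_of_lt hm1 hxn) (not_lt.2 (h.aa_monotone hc))
    have h1 : CC a α * SS a α (n+1) ≤ CC a α * SS a α (m+1) :=
      mul_le_mul_of_nonneg_left (h.SS_anti (by omega)) h.CC_pos.le
    have h2 : 0 ≤ CC a α * aa a α m ^ (-(α+1)) * max (2*aa a α m - x) 0 :=
      mul_nonneg (cPnonneg h m) (le_max_right _ _)
    linarith

lemma tail_pos (h : H α a) (ht : TailFacts α a μ) : ∀ x : ℝ, 0 < tail μ x := by
  intro x
  rcases lt_or_ge x a with hxa | hxa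
  · rw [ht.1 x hxa]; norm_num
  · obtain ⟨m, _, hm2⟩ := locator h x hxa
    exact lt_of_lt_of_le (mul_pos h.CC_pos (h.SS_pos (m+1))) (tail_lb h ht m x hm2)

lemma tail_ub (h : H α a) (ht : TailFacts α a μ) [IsFiniteMeasure μ] :
    ∀ n : ℕ, ∀ x : ℝ, 2 * aa a α n ≤ x → tail μ x ≤ CC a α * SS a α (n+1) := by
  intro n x hx
  have h0 := h.aa_pos n
  have h1 : tail μ x ≤ tail μ (2 * aa a α n) := tail_anti μ hx
  have h2 : tail μ (2 * aa a α n) = CC a α * SS a α (n+1) := by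
    rw [ht.2 n (2 * aa a α n) (by linarith) (by linarith [h.aa8 n])]
    simp
  linarith

lemma lip (h : H α a) (ht : TailFacts α a μ) :
    ∀ n : ℕ, ∀ s x : ℝ, aa a α n ≤ s → s ≤ x → x < aa a α (n+1) →
      tail μ s ≤ tail μ x + CC a α * aa a α n ^ (-(α+1)) * (x - s) := by
  intro n s x hns hsx hxn
  rw [ht.2 n s hns (lt_of_le_of_lt hsx hxn), ht.2 n x (le_trans hns hsx) hxn]
  set c := CC a α * aa a α n ^ (-(α+1)) with hc
  have hc0 : 0 ≤ c := cPnonneg h n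
  set A := 2*aa a α n - s with hA
  set B := 2*aa a α n - x with hB
  have hAB : A - B = x - s := by rw [hA, hB]; ring
  have hmax : max A 0 ≤ max B 0 + (A - B) := by
    apply max_le
    · have := le_max_left B (0:ℝ); linarith
    · have := le_max_right B (0:ℝ); linarith
  have := mul_le_mul_of_nonneg_left hmax hc0
  rw [hAB] at this
  nlinarith

lemma H.aa_split (h : H α a) (n : ℕ) :
    aa a α n ^ (-(α+1)) = aa a α n ^ (-α) * (aa a α n)⁻¹ := by
  rw [show -(α+1) = -α + (-1) by ring, Real.rpow_add (h.aa_pos n), Real.rpow_neg_one]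

lemma H.sq_negpow (h : H α a) (n : ℕ) :
    aa a α n ^ (-α) * aa a α n ^ (-α) ≤ aa a α n ^ (-(α+1)) := by
  rw [← Real.rpow_add (h.aa_pos n)]
  exact Real.rpow_le_rpow_of_exponent_le (h.aa_gt_one n).le (by linarith [h.α1])

lemma tail2an (h : H α a) (ht : TailFacts α a μ) (n : ℕ) :
    tail μ (2 * aa a α n) = CC a α * SS a α (n+1) := by
  have h0 := h.aa_pos n
  rw [ht.2 n (2 * aa a α n) (by linarith) (by linarith [h.aa8 n])]
  simp

lemma tail2an1 (h : H α a) (ht : TailFacts α a μ) (n : ℕ) :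
    tail μ (2 * aa a α n - 1) = CC a α * SS a α (n+1) + CC a α * aa a α (n+1) ^ (-α) := by
  have h0 := h.aa_pos n
  have h1 := h.aa_gt_one n
  rw [ht.2 n (2 * aa a α n - 1) (by linarith) (by linarith [h.aa8 n]),
    show 2*aa a α n - (2*aa a α n - 1) = 1 by ring, h.keyid n]
  norm_num

lemma aa_tendsto (h : H α a) : Tendsto (fun n => aa a α (n+1)) atTop atTop := by
  apply tendsto_atTop_mono (fun n => le_trans (h.aa_ge_8pow n) (h.aa_lt n).le)
  exact tendsto_pow_atTop_atTop_of_one_lt (by norm_num : (1:ℝ) < 8)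

lemma part2 (h : H α a) (ht : TailFacts α a μ) :
    Tendsto (fun n : ℕ => tail μ (2 * aa a α n - 1) / tail μ (2 * aa a α n))
      atTop (nhds 2) := by
  set v : ℕ → ℝ := fun n => aa a α (n+1) ^ (-α) with hv
  set u : ℕ → ℝ := fun n => SS a α (n+1) with hu
  set w : ℕ → ℝ := fun n => 1 + 2 * (aa a α (n+1))⁻¹ with hw
  have hupos : ∀ n, 0 < u n := fun n => h.SS_pos (n+1)
  have hvpos : ∀ n, 0 < v n := fun n => Real.rpow_pos_of_pos (h.aa_pos (n+1)) _
  have hCC := h.CC_pos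
  have hsplit : ∀ n, tail μ (2 * aa a α n - 1) / tail μ (2 * aa a α n)
      = 1 + v n / u n := by
    intro n
    rw [tail2an h ht n, tail2an1 h ht n]
    have h1 : u n ≠ 0 := (hupos n).ne'
    have h2 : CC a α ≠ 0 := hCC.ne'
    field_simp
    have h1' : SS a α (n+1) ≠ 0 := h1
    simp only [hu, hv]
    field_simp
  have hub : ∀ n, 1 + v n / u n ≤ 2 := by
    intro n
    have : v n / u n ≤ 1 := (div_le_one (hupos n)).2 (h.SS_ge (n+1))
    linarith
  have hwpos : ∀ n, 0 < w n := by
    intro n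
    have := h.aa_pos (n+1)
    have : 0 < (aa a α (n+1))⁻¹ := by positivity
    simp only [hw]
    linarith
  have hlb : ∀ n, 1 + 1 / w n ≤ 1 + v n / u n := by
    intro n
    have huvw : u n ≤ v n * w n := by
      have h1 : u n = v n + SS a α (n+2) := h.SS_rec (n+1)
      have h2 : SS a α (n+2) ≤ 2 * aa a α (n+2) ^ (-α) := h.SS_le (n+2)
      have h3 : aa a α (n+2) ^ (-α) = v n * (aa a α (n+1))⁻¹ := by
        rw [hv]
        simp only
        rw [h.keyid (n+1), h.aa_split (n+1)]
      have : v n * w n = v n + 2 * (v n * (aa a α (n+1))⁻¹) := by rw [hw]; ring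
      rw [this, h1]
      linarith
    have h4 : v n / (v n * w n) ≤ v n / u n :=
      div_le_div_of_nonneg_left (hvpos n).le (hupos n) huvw
    have h5 : v n / (v n * w n) = 1 / w n := by
      rw [div_mul_eq_div_div, div_self (hvpos n).ne']
    linarith [h5 ▸ h4]
  have hwinv : Tendsto (fun n => (aa a α (n+1))⁻¹) atTop (nhds 0) :=
    (aa_tendsto h).inv_tendsto_atTop
  have hwt : Tendsto w atTop (nhds 1) := by
    have : Tendsto w atTop (nhds (1 + 2 * 0)) :=
      tendsto_const_nhds.add (tendsto_const_nhds.mul hwinv)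
    simpa using this
  have hLt : Tendsto (fun n => 1 + 1 / w n) atTop (nhds 2) := by
    have h2' : Tendsto (fun n => 1 + 1 / w n) atTop (nhds (1 + 1/1)) :=
      tendsto_const_nhds.add (tendsto_const_nhds.div hwt one_ne_zero)
    rw [show (1:ℝ)+1/1 = 2 from by norm_num] at h2'
    exact h2'
  apply tendsto_of_tendsto_of_tendsto_of_le_of_le hLt
    (tendsto_const_nhds : Tendsto (fun _ : ℕ => (2:ℝ)) atTop (nhds 2))
  · intro n
    show 1 + 1 / w n ≤ tail μ (2 * aa a α n - 1) / tail μ (2 * aa a α n)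
    rw [hsplit n]; exact hlb n
  · intro n
    show tail μ (2 * aa a α n - 1) / tail μ (2 * aa a α n) ≤ 2
    rw [hsplit n]; exact hub n
lemma pow8_rpow (c : ℝ) (i : ℕ) : ((8:ℝ)^i) ^ c = ((8:ℝ)^c)^i := by
  rw [← rpow_natCast (8:ℝ) i, ← rpow_mul (by norm_num), mul_comm,
    rpow_mul (by norm_num : (0:ℝ) ≤ 8), rpow_natCast]

lemma H.aa_decay (h : H α a) (m : ℕ) : aa a α m ^ (1-α) ≤ (1/2:ℝ)^m := by
  have h8 : (0:ℝ) < (8:ℝ)^m := by positivity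
  have h1 : aa a α m ^ (1-α) ≤ ((8:ℝ)^m)^(1-α) :=
    rpow_le_rpow_of_nonpos h8 (h.aa_ge_8pow m) (by linarith [h.α1])
  have h2 : ((8:ℝ)^m)^(1-α) = ((8:ℝ)^(1-α))^m := pow8_rpow _ m
  have h28 : (2:ℝ) ≤ (8:ℝ)^((1:ℝ)/2) := by
    have e1 : ((2:ℝ)^(3:ℝ)) = 8 := by
      rw [show (3:ℝ) = ((3:ℕ):ℝ) by norm_num, rpow_natCast]; norm_num
    have e2 : (2:ℝ)^(1:ℝ) ≤ (2:ℝ)^((3:ℝ)*(1/2)) :=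
      rpow_le_rpow_of_exponent_le one_le_two (by norm_num)
    rw [rpow_one] at e2
    rw [rpow_mul (by norm_num : (0:ℝ) ≤ 2)] at e2
    rw [e1] at e2
    exact e2
  have h3 : (8:ℝ)^(1-α) ≤ 1/2 := by
    have e3 : (8:ℝ)^(1-α) ≤ (8:ℝ)^(-((1:ℝ)/2)) :=
      rpow_le_rpow_of_exponent_le (by norm_num) (by linarith [h.hα])
    have e4 : (8:ℝ)^(-((1:ℝ)/2)) = ((8:ℝ)^((1:ℝ)/2))⁻¹ := by
      rw [rpow_neg (by norm_num : (0:ℝ) ≤ 8)]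
    have e5 : ((8:ℝ)^((1:ℝ)/2))⁻¹ ≤ 1/2 := by
      have := inv_anti₀ (by norm_num : (0:ℝ) < 2) h28
      calc ((8:ℝ)^((1:ℝ)/2))⁻¹ ≤ 2⁻¹ := this
      _ = 1/2 := by norm_num
    calc (8:ℝ)^(1-α) ≤ (8:ℝ)^(-((1:ℝ)/2)) := e3
    _ = ((8:ℝ)^((1:ℝ)/2))⁻¹ := e4
    _ ≤ 1/2 := e5
  calc aa a α m ^ (1-α) ≤ ((8:ℝ)^(1-α))^m := h2 ▸ h1
  _ ≤ (1/2:ℝ)^m := pow_le_pow_left₀ (rpow_nonneg (by norm_num) _) h3 m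

lemma part1 (h : H α a) (ht : TailFacts α a μ) [IsProbabilityMeasure μ]
    (hs : μ (Set.Iio 0) = 0) : Integrable (fun y : ℝ => y) μ := by
  refine ⟨measurable_id.aestronglyMeasurable, ?_⟩
  rw [HasFiniteIntegral]
  set f : ℝ → ℝ≥0∞ := fun y => (‖y‖₊ : ℝ≥0∞) with hf
  set s0 : Set ℝ := Iio 0 with hs0
  set s1 : Set ℝ := Ico 0 (aa a α 1) with hs1
  set A : ℕ → Set ℝ := fun n => Ico (aa a α (n+1)) (2 * aa a α (n+1)) with hA
  set B : ℕ → Set ℝ := fun n => Ico (2 * aa a α (n+1)) (aa a α (n+2)) with hB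
  have hcover : (univ : Set ℝ) ⊆ (s0 ∪ s1) ∪ ((⋃ n, A n) ∪ (⋃ n, B n)) := by
    intro y _
    rcases lt_or_ge y 0 with hy | hy
    · exact Or.inl (Or.inl hy)
    rcases lt_or_ge y (aa a α 1) with hy1 | hy1
    · exact Or.inl (Or.inr ⟨hy, hy1⟩)
    · obtain ⟨m, hm1, hm2⟩ := locator h y (le_trans (h.aa_ge_a 0) (by
        rw [h.aa_zero] at *; exact le_trans (h.aa_ge_a 1) hy1))
      obtain ⟨k, rfl⟩ : ∃ k, m = k+1 := by
        refine ⟨m-1, ?_⟩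
        rcases Nat.eq_zero_or_pos m with rfl | hm
        · exact absurd hm2 (not_lt.2 hy1)
        · omega
      rcases lt_or_ge y (2 * aa a α (k+1)) with h2 | h2
      · exact Or.inr (Or.inl (mem_iUnion.2 ⟨k, hm1, h2⟩))
      · exact Or.inr (Or.inr (mem_iUnion.2 ⟨k, h2, hm2⟩))
  -- piece bounds
  have hfbd : ∀ (c : ℝ) (s : Set ℝ), (∀ y ∈ s, 0 ≤ y ∧ y ≤ c) →
      ∫⁻ y in s, f y ∂μ ≤ ENNReal.ofReal c * μ s := by
    intro c s hc
    calc ∫⁻ y in s, f y ∂μ ≤ ∫⁻ _ in s, ENNReal.ofReal c ∂μ := by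
          apply setLIntegral_mono measurable_const
          intro y hy
          rw [hf]
          simp only
          rw [← enorm_eq_nnnorm, Real.enorm_eq_ofReal (hc y hy).1]
          exact ENNReal.ofReal_le_ofReal (hc y hy).2
    _ = ENNReal.ofReal c * μ s := setLIntegral_const s _
  have hS1 : ∫⁻ y in s1, f y ∂μ ≤ ENNReal.ofReal (aa a α 1) := by
    calc ∫⁻ y in s1, f y ∂μ ≤ ENNReal.ofReal (aa a α 1) * μ s1 :=
          hfbd (aa a α 1) s1 (fun y hy => ⟨hy.1, hy.2.le⟩)
    _ ≤ ENNReal.ofReal (aa a α 1) * 1 := mul_le_mul_right prob_le_one _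
    _ = _ := mul_one _
  have hAn : ∀ n, ∫⁻ y in A n, f y ∂μ ≤
      ENNReal.ofReal (4 * CC a α) * ENNReal.ofReal ((1/2:ℝ)^(n+1)) := by
    intro n
    have hpos := h.aa_pos (n+1)
    have h1gt := h.aa_gt_one (n+1)
    have hrp : (0:ℝ) ≤ aa a α (n+1) ^ (-α) := Real.rpow_nonneg hpos.le _
    have hC := h.CC_pos
    have hμA : μ (A n) ≤ ENNReal.ofReal (2 * CC a α * aa a α (n+1) ^ (-α)) := by
      have hsub : A n ⊆ Ioi (aa a α (n+1) - 1) := fun y hy =>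
        lt_of_lt_of_le (by linarith) hy.1
      have h2 : 2 * aa a α n ≤ aa a α (n+1) - 1 := by
        have h3 := h.aa8 n; have h4 := h.aa_gt_one n; linarith
      have htub : tail μ (aa a α (n+1) - 1) ≤ 2 * CC a α * aa a α (n+1) ^ (-α) := by
        have h5 := tail_ub h ht n _ h2
        have hSle := h.SS_le (n+1)
        nlinarith
      calc μ (A n) ≤ μ (Ioi (aa a α (n+1) - 1)) := measure_mono hsub
      _ = ENNReal.ofReal (tail μ (aa a α (n+1) - 1)) := meas_Ioi μ _
      _ ≤ _ := ENNReal.ofReal_le_ofReal htub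
    calc ∫⁻ y in A n, f y ∂μ ≤ ENNReal.ofReal (2 * aa a α (n+1)) * μ (A n) :=
          hfbd _ _ (fun y hy => ⟨le_trans hpos.le hy.1, hy.2.le⟩)
    _ ≤ ENNReal.ofReal (2 * aa a α (n+1))
        * ENNReal.ofReal (2 * CC a α * aa a α (n+1) ^ (-α)) := mul_le_mul_right hμA _
    _ = ENNReal.ofReal (4 * CC a α * (aa a α (n+1) * aa a α (n+1) ^ (-α))) := by
        rw [← ENNReal.ofReal_mul (by linarith)]
        congr 1
        ring
    _ = ENNReal.ofReal (4 * CC a α * aa a α (n+1) ^ (1-α)) := by rw [h.mul_negpow (n+1)]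
    _ ≤ ENNReal.ofReal (4 * CC a α) * ENNReal.ofReal ((1/2:ℝ)^(n+1)) := by
        rw [← ENNReal.ofReal_mul (by linarith)]
        apply ENNReal.ofReal_le_ofReal
        have hd := h.aa_decay (n+1)
        have hrp2 : (0:ℝ) ≤ aa a α (n+1) ^ (1-α) := Real.rpow_nonneg hpos.le _
        nlinarith
  have hBn : ∀ n, ∫⁻ y in B n, f y ∂μ ≤
      ENNReal.ofReal (3 * CC a α) * ENNReal.ofReal ((1/2:ℝ)^(n+2)) := by
    intro n
    have hpos := h.aa_pos (n+1)
    have hpos2 := h.aa_pos (n+2)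
    have h1gt := h.aa_gt_one (n+1)
    have hrp : (0:ℝ) ≤ aa a α (n+2) ^ (-α) := Real.rpow_nonneg hpos2.le _
    have hC := h.CC_pos
    have h8 := h.aa8 (n+1)
    have hμB : μ (B n) ≤ ENNReal.ofReal (3 * CC a α * aa a α (n+2) ^ (-α)) := by
      have hsub : B n ⊆ Ioi (2 * aa a α (n+1) - 1) := fun y hy =>
        lt_of_lt_of_le (by linarith) hy.1
      have htub : tail μ (2 * aa a α (n+1) - 1) ≤ 3 * CC a α * aa a α (n+2) ^ (-α) := by
        rw [tail2an1 h ht (n+1)]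
        have hSle := h.SS_le (n+2)
        nlinarith
      calc μ (B n) ≤ μ (Ioi (2 * aa a α (n+1) - 1)) := measure_mono hsub
      _ = ENNReal.ofReal (tail μ (2 * aa a α (n+1) - 1)) := meas_Ioi μ _
      _ ≤ _ := ENNReal.ofReal_le_ofReal htub
    calc ∫⁻ y in B n, f y ∂μ ≤ ENNReal.ofReal (aa a α (n+2)) * μ (B n) :=
          hfbd _ _ (fun y hy => ⟨by nlinarith [hy.1], hy.2.le⟩)
    _ ≤ ENNReal.ofReal (aa a α (n+2))
        * ENNReal.ofReal (3 * CC a α * aa a α (n+2) ^ (-α)) := mul_le_mul_right hμB _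
    _ = ENNReal.ofReal (3 * CC a α * (aa a α (n+2) * aa a α (n+2) ^ (-α))) := by
        rw [← ENNReal.ofReal_mul hpos2.le]
        congr 1
        ring
    _ = ENNReal.ofReal (3 * CC a α * aa a α (n+2) ^ (1-α)) := by rw [h.mul_negpow (n+2)]
    _ ≤ ENNReal.ofReal (3 * CC a α) * ENNReal.ofReal ((1/2:ℝ)^(n+2)) := by
        rw [← ENNReal.ofReal_mul (by linarith)]
        apply ENNReal.ofReal_le_ofReal
        have hd := h.aa_decay (n+2)
        have hrp2 : (0:ℝ) ≤ aa a α (n+2) ^ (1-α) := Real.rpow_nonneg hpos2.le _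
        nlinarith
  set q : ℝ≥0∞ := ENNReal.ofReal (1/2) with hq
  have hq1 : q < 1 := by rw [hq]; exact ENNReal.ofReal_lt_one.2 (by norm_num)
  have hfin : (1 - q)⁻¹ < ⊤ := ENNReal.inv_lt_top.2 (tsub_pos_of_lt hq1)
  have hgen : ∀ (c : ℝ) (k : ℕ) (s : ℕ → Set ℝ),
      (∀ n, ∫⁻ y in s n, f y ∂μ ≤ ENNReal.ofReal c * ENNReal.ofReal ((1/2:ℝ)^(n+k))) →
      ∫⁻ y in ⋃ n, s n, f y ∂μ ≤ ENNReal.ofReal c * (1 - q)⁻¹ := by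
    intro c k s hsb
    calc ∫⁻ y in ⋃ n, s n, f y ∂μ ≤ ∑' n, ∫⁻ y in s n, f y ∂μ := lintegral_iUnion_le _ _
    _ ≤ ∑' n, ENNReal.ofReal c * q^n := by
        apply ENNReal.tsum_le_tsum
        intro n
        refine le_trans (hsb n) (mul_le_mul_right ?_ _)
        rw [hq, ← ENNReal.ofReal_pow (by norm_num)]
        exact ENNReal.ofReal_le_ofReal (by
          apply pow_le_pow_of_le_one (by norm_num) (by norm_num)
          omega)
    _ = ENNReal.ofReal c * (1 - q)⁻¹ := by
        rw [ENNReal.tsum_mul_left, ENNReal.tsum_geometric]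
  have hUA := hgen (4 * CC a α) 1 A hAn
  have hUB := hgen (3 * CC a α) 2 B hBn
  have h0 : ∫⁻ y in s0, f y ∂μ = 0 := setLIntegral_measure_zero _ _ hs
  calc ∫⁻ y, f y ∂μ = ∫⁻ y in univ, f y ∂μ := (setLIntegral_univ f).symm
  _ ≤ ∫⁻ y in (s0 ∪ s1) ∪ ((⋃ n, A n) ∪ (⋃ n, B n)), f y ∂μ := lintegral_mono_set hcover
  _ ≤ (∫⁻ y in s0 ∪ s1, f y ∂μ) + ∫⁻ y in (⋃ n, A n) ∪ (⋃ n, B n), f y ∂μ :=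
      lintegral_union_le _ _ _
  _ ≤ ((∫⁻ y in s0, f y ∂μ) + ∫⁻ y in s1, f y ∂μ)
      + ((∫⁻ y in ⋃ n, A n, f y ∂μ) + ∫⁻ y in ⋃ n, B n, f y ∂μ) :=
      add_le_add (lintegral_union_le _ _ _) (lintegral_union_le _ _ _)
  _ < ⊤ := by
      rw [h0, zero_add]
      have t1 : ∫⁻ y in s1, f y ∂μ < ⊤ := lt_of_le_of_lt hS1 ENNReal.ofReal_lt_top
      have t2 : ∫⁻ y in ⋃ n, A n, f y ∂μ < ⊤ :=
        lt_of_le_of_lt hUA (ENNReal.mul_lt_top ENNReal.ofReal_lt_top hfin)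
      have t3 : ∫⁻ y in ⋃ n, B n, f y ∂μ < ⊤ :=
        lt_of_le_of_lt hUB (ENNReal.mul_lt_top ENNReal.ofReal_lt_top hfin)
      exact ENNReal.add_lt_top.2 ⟨t1, ENNReal.add_lt_top.2 ⟨t2, t3⟩⟩
set_option maxHeartbeats 1000000 in
lemma part4 (h : H α a) (ht : TailFacts α a μ) [IsProbabilityMeasure μ]
    (hs : μ (Set.Iio 0) = 0) (hint : MeasureTheory.Integrable (fun y : ℝ => y) μ) :
    MemOS μ := by
  have hC := h.CC_pos
  set Me : ℝ≥0∞ := ∫⁻ y, (‖y‖₊ : ℝ≥0∞) ∂μ with hMe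
  have hMelt : Me < ⊤ := hint.2
  set MR : ℝ := Me.toReal with hMR
  have hMR0 : 0 ≤ MR := ENNReal.toReal_nonneg
  have hMeval : Me = ENNReal.ofReal MR := (ENNReal.ofReal_toReal hMelt.ne).symm
  set K : ℝ := 10 + 2*MR + 12*CC a α with hK
  have hK0 : 0 ≤ K := by positivity
  refine ⟨K, Filter.eventually_map.2 ?_⟩
  filter_upwards [Filter.eventually_ge_atTop (aa a α 1)] with x hx
  -- locate x
  obtain ⟨n', hn1', hn2'⟩ := locator h x (le_trans (h.aa_ge_a 1) hx)
  obtain ⟨n, rfl⟩ : ∃ k, n' = k+1 := by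
    refine ⟨n'-1, ?_⟩
    rcases Nat.eq_zero_or_pos n' with rfl | hm
    · exfalso
      have h01 : aa a α 1 ≤ x := hx
      exact absurd hn2' (not_lt.2 h01)
    · omega
  set N := n + 1 with hN
  set X : ℝ := tail μ x with hX
  set T : ℝ := CC a α * SS a α N with hT
  set D : ℝ := CC a α * aa a α N ^ (-(α+1)) with hD
  have hXpos : 0 < X := tail_pos h ht x
  have haN := h.aa_pos N
  have haN1 := h.aa_pos n
  have ha8 := h.aa8 n
  have haG := h.aa_gt_one N
  have hrpN : (0:ℝ) ≤ aa a α N ^ (-α) := Real.rpow_nonneg haN.le _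
  have hrpN1 : (0:ℝ) ≤ aa a α N ^ (-(α+1)) := Real.rpow_nonneg haN.le _
  have hD0 : 0 ≤ D := mul_nonneg hC.le hrpN1
  have hT0 : 0 < T := mul_pos hC (h.SS_pos N)
  have hBL : CC a α * SS a α (N+1) ≤ X := tail_lb h ht N x hn2'
  have hDX : D ≤ X := by
    have h1 : aa a α N ^ (-(α+1)) = aa a α (N+1) ^ (-α) := (h.keyid N).symm
    have h2 : aa a α (N+1) ^ (-α) ≤ SS a α (N+1) := h.SS_ge (N+1)
    have : D ≤ CC a α * SS a α (N+1) := by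
      rw [hD, h1]
      exact mul_le_mul_of_nonneg_left h2 hC.le
    linarith
  have hT2 : T ≤ 2 * CC a α * aa a α N ^ (-α) := by
    have := h.SS_le N
    rw [hT]
    nlinarith
  have hTsq : T * T ≤ 4 * CC a α * X := by
    have h1 : T * T ≤ (2 * CC a α * aa a α N ^ (-α)) * (2 * CC a α * aa a α N ^ (-α)) := by
      nlinarith
    have h2 : (2 * CC a α * aa a α N ^ (-α)) * (2 * CC a α * aa a α N ^ (-α))
        = 4 * CC a α * (CC a α * (aa a α N ^ (-α) * aa a α N ^ (-α))) := by ring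
    have h3 : CC a α * (aa a α N ^ (-α) * aa a α N ^ (-α)) ≤ D := by
      rw [hD]
      exact mul_le_mul_of_nonneg_left (h.sq_negpow N) hC.le
    nlinarith
  have hhalf : 2 * aa a α n ≤ x / 2 := by linarith
  have htail_half : tail μ (x/2) ≤ T := tail_ub h ht n _ hhalf
  -- convolution as product measure
  have hadd : Measurable (fun p : ℝ × ℝ => p.1 + p.2) := measurable_fst.add measurable_snd
  have hconv : (mconv μ μ) (Set.Ioi x) = (μ.prod μ) {p : ℝ × ℝ | x < p.1 + p.2} := by
    rw [mconv, Measure.map_apply hadd measurableSet_Ioi]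
    rfl
  set S1 : Set (ℝ × ℝ) := {p | x < p.1 + p.2} ∩ {p | p.2 ≤ x/2} with hS1
  set S2 : Set (ℝ × ℝ) := {p | x < p.1 + p.2} ∩ {p | p.1 ≤ x/2} with hS2
  set S3 : Set (ℝ × ℝ) := (Set.Ioi (x/2)) ×ˢ (Set.Ioi (x/2)) with hS3
  have hm0 : MeasurableSet {p : ℝ × ℝ | x < p.1 + p.2} :=
    measurableSet_lt measurable_const hadd
  have hm1 : MeasurableSet S1 := hm0.inter (measurableSet_le measurable_snd measurable_const)
  have hm2 : MeasurableSet S2 := hm0.inter (measurableSet_le measurable_fst measurable_const)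
  have hsub : {p : ℝ × ℝ | x < p.1 + p.2} ⊆ (S1 ∪ S2) ∪ S3 := by
    intro p hp
    rcases le_or_gt p.2 (x/2) with h1 | h1
    · exact Or.inl (Or.inl ⟨hp, h1⟩)
    rcases le_or_gt p.1 (x/2) with h2 | h2
    · exact Or.inl (Or.inr ⟨hp, h2⟩)
    · exact Or.inr ⟨h2, h1⟩
  have hswap : (μ.prod μ) S2 = (μ.prod μ) S1 := by
    have hset : S2 = Prod.swap ⁻¹' S1 := by
      ext p
      simp only [hS1, hS2, Set.mem_inter_iff, Set.mem_setOf_eq, Set.mem_preimage,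
        Prod.fst_swap, Prod.snd_swap]
      constructor
      · rintro ⟨h1, h2⟩; exact ⟨by linarith [add_comm p.1 p.2], h2⟩
      · rintro ⟨h1, h2⟩; exact ⟨by linarith [add_comm p.1 p.2], h2⟩
    rw [hset, ← Measure.map_apply measurable_swap hm1, Measure.prod_swap]
  have hS1val : (μ.prod μ) S1 = ∫⁻ b in Set.Iic (x/2), μ (Set.Ioi (x - b)) ∂μ := by
    rw [Measure.prod_apply_symm hm1]
    have hpt : ∀ b : ℝ, μ ((fun y => (y, b)) ⁻¹' S1)
        = (Set.Iic (x/2)).indicator (fun b => μ (Set.Ioi (x - b))) b := by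
      intro b
      by_cases hb : b ≤ x/2
      · rw [Set.indicator_of_mem (Set.mem_Iic.2 hb)]
        congr 1
        ext y
        simp only [Set.mem_preimage, hS1, Set.mem_inter_iff, Set.mem_setOf_eq, Set.mem_Ioi]
        constructor
        · rintro ⟨h1, _⟩; linarith
        · intro h1; exact ⟨by linarith, hb⟩
      · rw [Set.indicator_of_notMem (by simpa using hb)]
        have : ((fun y => (y, b)) ⁻¹' S1) = ∅ := by
          ext y
          simp only [Set.mem_preimage, hS1, Set.mem_inter_iff, Set.mem_setOf_eq,
            Set.mem_empty_iff_false, iff_false, not_and]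
          intro _
          exact hb
        rw [this, measure_empty]
    rw [lintegral_congr hpt, lintegral_indicator measurableSet_Iic]
  -- split Iic = Iio 0 ∪ Icc 0 (x/2)
  have hx0 : (0:ℝ) ≤ x/2 := by linarith
  have hIic : Set.Iic (x/2) = Set.Iio (0:ℝ) ∪ Set.Icc 0 (x/2) := by
    ext y
    simp only [Set.mem_Iic, Set.mem_union, Set.mem_Iio, Set.mem_Icc]
    constructor
    · intro hy
      rcases lt_or_ge y 0 with h1 | h1
      · exact Or.inl h1
      · exact Or.inr ⟨h1, hy⟩
    · rintro (h1 | ⟨_, h2⟩)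
      · linarith
      · exact h2
  -- pointwise bound on Icc
  have hptb : ∀ b ∈ Set.Icc (0:ℝ) (x/2), μ (Set.Ioi (x - b)) ≤
      μ (Set.Ioi x) + ENNReal.ofReal (D * b)
        + (Set.Ioi (x - aa a α N)).indicator (fun _ => ENNReal.ofReal T) b := by
    intro b hb
    rcases le_or_gt (aa a α N) (x - b) with hcase | hcase
    · have h1 : tail μ (x - b) ≤ tail μ x + D * b := by
        have h2 := lip h ht N (x-b) x hcase (by linarith [hb.1]) hn2'
        rw [show x - (x - b) = b by ring] at h2
        exact h2
      calc μ (Set.Ioi (x-b)) = ENNReal.ofReal (tail μ (x-b)) := meas_Ioi μ _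
      _ ≤ ENNReal.ofReal (tail μ x + D * b) := ENNReal.ofReal_le_ofReal h1
      _ ≤ ENNReal.ofReal (tail μ x) + ENNReal.ofReal (D * b) := ENNReal.ofReal_add_le
      _ = μ (Set.Ioi x) + ENNReal.ofReal (D * b) := by rw [meas_Ioi]
      _ ≤ _ := le_add_right le_rfl
    · have hbmem : b ∈ Set.Ioi (x - aa a α N) := by
        simp only [Set.mem_Ioi]
        linarith
      have h2 : 2 * aa a α n ≤ x - b := by linarith [hb.2]
      have h3 : tail μ (x-b) ≤ T := tail_ub h ht n _ h2
      calc μ (Set.Ioi (x-b)) = ENNReal.ofReal (tail μ (x-b)) := meas_Ioi μ _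
      _ ≤ ENNReal.ofReal T := ENNReal.ofReal_le_ofReal h3
      _ = (Set.Ioi (x - aa a α N)).indicator (fun _ => ENNReal.ofReal T) b := by
          rw [Set.indicator_of_mem hbmem]
      _ ≤ _ := le_add_self
  -- third term bound
  have hthird : ENNReal.ofReal T * μ (Set.Ioi (x - aa a α N) ∩ Set.Icc 0 (x/2))
      ≤ ENNReal.ofReal ((4 + 4 * CC a α) * X) := by
    rcases le_or_gt x (3/2 * aa a α N) with hc1 | hc1
    · have hXge : T ≤ 4 * X := by
        have hfor := ht.2 N x hn1' hn2'
        have hmax : aa a α N / 2 ≤ max (2 * aa a α N - x) 0 :=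
          le_trans (by linarith) (le_max_left _ _)
        have hSS0 : 0 ≤ CC a α * SS a α (N+1) := le_trans (by norm_num)
          (mul_pos hC (h.SS_pos (N+1))).le
        have hDnn : CC a α * aa a α N ^ (-(α+1)) * (aa a α N / 2)
            ≤ CC a α * aa a α N ^ (-(α+1)) * max (2 * aa a α N - x) 0 :=
          mul_le_mul_of_nonneg_left hmax hD0
        have hval : CC a α * aa a α N ^ (-(α+1)) * (aa a α N / 2)
            = CC a α * aa a α N ^ (-α) / 2 := by
          rw [show CC a α * aa a α N ^ (-(α+1)) * (aa a α N / 2)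
            = CC a α * (aa a α N ^ (-(α+1)) * aa a α N) / 2 by ring, h.aan_mul N]
        have hXlb : CC a α * aa a α N ^ (-α) / 2 ≤ X := by
          rw [hX, hfor]
          rw [hval] at hDnn
          linarith
        nlinarith
      calc ENNReal.ofReal T * μ (Set.Ioi (x - aa a α N) ∩ Set.Icc 0 (x/2))
          ≤ ENNReal.ofReal T * 1 := mul_le_mul_right prob_le_one _
      _ = ENNReal.ofReal T := mul_one _
      _ ≤ ENNReal.ofReal ((4 + 4 * CC a α) * X) :=
          ENNReal.ofReal_le_ofReal (by nlinarith)
    · have h2 : 2 * aa a α n ≤ x - aa a α N := by linarith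
      have h3 : tail μ (x - aa a α N) ≤ T := tail_ub h ht n _ h2
      calc ENNReal.ofReal T * μ (Set.Ioi (x - aa a α N) ∩ Set.Icc 0 (x/2))
          ≤ ENNReal.ofReal T * μ (Set.Ioi (x - aa a α N)) :=
            mul_le_mul_right (measure_mono Set.inter_subset_left) _
      _ = ENNReal.ofReal T * ENNReal.ofReal (tail μ (x - aa a α N)) := by rw [meas_Ioi]
      _ ≤ ENNReal.ofReal T * ENNReal.ofReal T :=
            mul_le_mul_right (ENNReal.ofReal_le_ofReal h3) _
      _ = ENNReal.ofReal (T * T) := (ENNReal.ofReal_mul hT0.le).symm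
      _ ≤ ENNReal.ofReal ((4 + 4 * CC a α) * X) :=
            ENNReal.ofReal_le_ofReal (by nlinarith)
  -- integral bound on Icc piece
  have hg2meas : Measurable (fun b : ℝ => ENNReal.ofReal (D * b)) :=
    ENNReal.measurable_ofReal.comp (measurable_id.const_mul D)
  have hg3meas : Measurable ((Set.Ioi (x - aa a α N)).indicator
      (fun _ : ℝ => ENNReal.ofReal T)) :=
    measurable_const.indicator measurableSet_Ioi
  have hIcc : ∫⁻ b in Set.Icc 0 (x/2), μ (Set.Ioi (x - b)) ∂μ ≤
      ENNReal.ofReal ((5 + MR + 4 * CC a α) * X) := by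
    have step1 : ∫⁻ b in Set.Icc 0 (x/2), μ (Set.Ioi (x - b)) ∂μ ≤
        ∫⁻ b in Set.Icc 0 (x/2), (μ (Set.Ioi x) + ENNReal.ofReal (D * b)
          + (Set.Ioi (x - aa a α N)).indicator (fun _ => ENNReal.ofReal T) b) ∂μ :=
      setLIntegral_mono ((measurable_const.add hg2meas).add hg3meas) hptb
    have step2 : ∫⁻ b in Set.Icc 0 (x/2), (μ (Set.Ioi x) + ENNReal.ofReal (D * b)
          + (Set.Ioi (x - aa a α N)).indicator (fun _ => ENNReal.ofReal T) b) ∂μ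
        = (∫⁻ _ in Set.Icc 0 (x/2), μ (Set.Ioi x) ∂μ)
          + (∫⁻ b in Set.Icc 0 (x/2), ENNReal.ofReal (D * b) ∂μ)
          + ∫⁻ b in Set.Icc 0 (x/2),
              (Set.Ioi (x - aa a α N)).indicator (fun _ => ENNReal.ofReal T) b ∂μ := by
      rw [lintegral_add_left (f := fun b => μ (Set.Ioi x) + ENNReal.ofReal (D * b)) (measurable_const.add hg2meas),
        lintegral_add_left (f := fun _ => μ (Set.Ioi x)) measurable_const]
    have p1 : (∫⁻ _ in Set.Icc 0 (x/2), μ (Set.Ioi x) ∂μ) ≤ ENNReal.ofReal X := by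
      rw [setLIntegral_const]
      calc μ (Set.Ioi x) * μ (Set.Icc 0 (x/2)) ≤ μ (Set.Ioi x) * 1 :=
        mul_le_mul_right prob_le_one _
      _ = μ (Set.Ioi x) := mul_one _
      _ = ENNReal.ofReal X := meas_Ioi μ x
    have p2 : (∫⁻ b in Set.Icc 0 (x/2), ENNReal.ofReal (D * b) ∂μ)
        ≤ ENNReal.ofReal (MR * X) := by
      have e1 : ∀ b : ℝ, ENNReal.ofReal (D * b) ≤ ENNReal.ofReal D * (‖b‖₊ : ℝ≥0∞) := by
        intro b
        rw [ENNReal.ofReal_mul hD0]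
        exact mul_le_mul_right (Real.ofReal_le_enorm b) _
      calc (∫⁻ b in Set.Icc 0 (x/2), ENNReal.ofReal (D * b) ∂μ)
          ≤ ∫⁻ b in Set.Icc 0 (x/2), ENNReal.ofReal D * (‖b‖₊ : ℝ≥0∞) ∂μ :=
            setLIntegral_mono (measurable_const.mul measurable_nnnorm.coe_nnreal_ennreal)
              (fun b _ => e1 b)
      _ = ENNReal.ofReal D * ∫⁻ b in Set.Icc 0 (x/2), (‖b‖₊ : ℝ≥0∞) ∂μ :=
            lintegral_const_mul _ measurable_nnnorm.coe_nnreal_ennreal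
      _ ≤ ENNReal.ofReal D * Me :=
            mul_le_mul_right (setLIntegral_le_lintegral _ _) _
      _ = ENNReal.ofReal D * ENNReal.ofReal MR := by rw [hMeval]
      _ = ENNReal.ofReal (D * MR) := (ENNReal.ofReal_mul hD0).symm
      _ ≤ ENNReal.ofReal (MR * X) :=
            ENNReal.ofReal_le_ofReal (by nlinarith)
    have p3 : (∫⁻ b in Set.Icc 0 (x/2),
          (Set.Ioi (x - aa a α N)).indicator (fun _ => ENNReal.ofReal T) b ∂μ)
        ≤ ENNReal.ofReal ((4 + 4 * CC a α) * X) := by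
      rw [lintegral_indicator_const measurableSet_Ioi,
        Measure.restrict_apply measurableSet_Ioi]
      exact hthird
    refine le_trans step1 ?_
    rw [step2]
    refine le_trans (add_le_add (add_le_add p1 p2) p3) ?_
    rw [← ENNReal.ofReal_add (by positivity) (by positivity),
      ← ENNReal.ofReal_add (by positivity) (by positivity)]
    exact ENNReal.ofReal_le_ofReal (le_of_eq (by ring))
  have hS1bd : (μ.prod μ) S1 ≤ ENNReal.ofReal ((5 + MR + 4 * CC a α) * X) := by
    rw [hS1val, hIic]
    calc ∫⁻ b in Set.Iio 0 ∪ Set.Icc 0 (x/2), μ (Set.Ioi (x - b)) ∂μ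
        ≤ (∫⁻ b in Set.Iio 0, μ (Set.Ioi (x - b)) ∂μ)
          + ∫⁻ b in Set.Icc 0 (x/2), μ (Set.Ioi (x - b)) ∂μ := lintegral_union_le _ _ _
    _ = ∫⁻ b in Set.Icc 0 (x/2), μ (Set.Ioi (x - b)) ∂μ := by
        rw [setLIntegral_measure_zero _ _ hs, zero_add]
    _ ≤ _ := hIcc
  have hS3bd : (μ.prod μ) S3 ≤ ENNReal.ofReal (4 * CC a α * X) := by
    rw [hS3, Measure.prod_prod, meas_Ioi]
    calc ENNReal.ofReal (tail μ (x/2)) * ENNReal.ofReal (tail μ (x/2))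
        ≤ ENNReal.ofReal T * ENNReal.ofReal T :=
          mul_le_mul' (ENNReal.ofReal_le_ofReal htail_half)
            (ENNReal.ofReal_le_ofReal htail_half)
    _ = ENNReal.ofReal (T * T) := (ENNReal.ofReal_mul hT0.le).symm
    _ ≤ ENNReal.ofReal (4 * CC a α * X) := ENNReal.ofReal_le_ofReal (by nlinarith)
  have htotal : (mconv μ μ) (Set.Ioi x) ≤ ENNReal.ofReal (K * X) := by
    calc (mconv μ μ) (Set.Ioi x) = (μ.prod μ) {p : ℝ × ℝ | x < p.1 + p.2} := hconv
    _ ≤ (μ.prod μ) ((S1 ∪ S2) ∪ S3) := measure_mono hsub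
    _ ≤ (μ.prod μ) (S1 ∪ S2) + (μ.prod μ) S3 := measure_union_le _ _
    _ ≤ ((μ.prod μ) S1 + (μ.prod μ) S2) + (μ.prod μ) S3 :=
        add_le_add (measure_union_le _ _) le_rfl
    _ = ((μ.prod μ) S1 + (μ.prod μ) S1) + (μ.prod μ) S3 := by rw [hswap]
    _ ≤ (ENNReal.ofReal ((5 + MR + 4 * CC a α) * X)
          + ENNReal.ofReal ((5 + MR + 4 * CC a α) * X)) + ENNReal.ofReal (4 * CC a α * X) :=
        add_le_add (add_le_add hS1bd hS1bd) hS3bd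
    _ = ENNReal.ofReal (K * X) := by
        rw [← ENNReal.ofReal_add (by positivity) (by positivity),
          ← ENNReal.ofReal_add (by positivity) (by positivity)]
        congr 1
        rw [hK]
        ring
  have hfinal : tail (mconv μ μ) x ≤ K * X :=
    ENNReal.toReal_le_of_le_ofReal (by positivity) htotal
  rw [div_le_iff₀ hXpos]
  exact hfinal

end Stmt19Aux

theorem stmt19 (α a : ℝ) (hα1 : 3 / 2 < α) (hα2 : α < (Real.sqrt 5 + 1) / 2)
    (ha : 1 < a) (ha' : 8 * a < a ^ (1 + 1 / α))
    (F0 : Measure ℝ) [IsProbabilityMeasure F0] (hs : F0 (Set.Iio 0) = 0) :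
    let r : ℝ := 1 + 1 / α
    let aseq : ℕ → ℝ := fun n => a ^ (r ^ n)
    let C : ℝ := (∑' n : ℕ, aseq n ^ (-α))⁻¹
    (∀ x : ℝ, x < aseq 0 → tail F0 x = 1) →
    (∀ n : ℕ, ∀ x : ℝ, aseq n ≤ x → x < 2 * aseq n →
      tail F0 x = (∑' i : ℕ, C * aseq (n + i) ^ (-α)) - C * aseq n ^ (-(α + 1)) * (x - aseq n)) →
    (∀ n : ℕ, ∀ x : ℝ, 2 * aseq n ≤ x → x < aseq (n + 1) →
      tail F0 x = ∑' i : ℕ, C * aseq (n + 1 + i) ^ (-α)) →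
    (MeasureTheory.Integrable (fun y : ℝ => y) F0 ∧
      Filter.Tendsto (fun n : ℕ => tail F0 (2 * aseq n - 1) / tail F0 (2 * aseq n))
        Filter.atTop (nhds 2) ∧
      (¬ ∀ t > (0 : ℝ),
        Filter.Tendsto (fun x => tail F0 (x - t) / tail F0 x) Filter.atTop (nhds 1)) ∧
      MemOS F0) := by
  intro r aseq C h1 h2 h3
  have h : Stmt19Aux.H α a := ⟨hα1, ha, ha'⟩
  have hCeq : C = Stmt19Aux.CC a α := by
    show (∑' n : ℕ, aseq n ^ (-α))⁻¹ = (Stmt19Aux.SS a α 0)⁻¹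
    congr 1
    show (∑' n : ℕ, aseq n ^ (-α)) = ∑' i : ℕ, Stmt19Aux.aa a α (0+i) ^ (-α)
    exact tsum_congr fun i => by rw [Nat.zero_add]; rfl
  have ht : Stmt19Aux.TailFacts α a F0 := by
    constructor
    · intro x hx
      apply h1 x
      show x < Stmt19Aux.aa a α 0
      rw [h.aa_zero]
      exact hx
    · intro n x hx1 hx2
      rcases lt_or_ge x (2 * Stmt19Aux.aa a α n) with hlt | hge
      · have e := h2 n x hx1 hlt
        rw [e, tsum_mul_left, hCeq]
        have hsum : (∑' i : ℕ, aseq (n + i) ^ (-α)) = Stmt19Aux.SS a α n := rfl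
        rw [hsum]
        have hmax : max (2 * Stmt19Aux.aa a α n - x) 0 = 2 * Stmt19Aux.aa a α n - x :=
          max_eq_left (by linarith)
        rw [hmax, h.SS_rec n, ← h.aan_mul n]
        show Stmt19Aux.CC a α * (Stmt19Aux.aa a α n ^ (-(α+1)) * Stmt19Aux.aa a α n
            + Stmt19Aux.SS a α (n+1))
            - Stmt19Aux.CC a α * Stmt19Aux.aa a α n ^ (-(α + 1)) * (x - Stmt19Aux.aa a α n)
          = _
        ring
      · have e := h3 n x hge hx2
        rw [e, tsum_mul_left, hCeq]
        have hsum : (∑' i : ℕ, aseq (n + 1 + i) ^ (-α)) = Stmt19Aux.SS a α (n+1) := rfl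
        rw [hsum]
        have hmax : max (2 * Stmt19Aux.aa a α n - x) 0 = 0 := max_eq_right (by linarith)
        rw [hmax]
        ring
  have hint : MeasureTheory.Integrable (fun y : ℝ => y) F0 := Stmt19Aux.part1 h ht hs
  have hp2 : Filter.Tendsto
      (fun n : ℕ => tail F0 (2 * aseq n - 1) / tail F0 (2 * aseq n))
      Filter.atTop (nhds 2) := Stmt19Aux.part2 h ht
  refine ⟨hint, hp2, ?_, Stmt19Aux.part4 h ht hs hint⟩
  intro hcon
  have h1t := hcon 1 one_pos
  have hseq : Filter.Tendsto (fun n : ℕ => 2 * Stmt19Aux.aa a α n) Filter.atTop Filter.atTop := by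
    apply tendsto_atTop_mono (fun n => ?_)
      (tendsto_pow_atTop_atTop_of_one_lt (by norm_num : (1:ℝ) < 8))
    have := h.aa_ge_8pow n
    have := h.aa_pos n
    linarith
  have hcomp : Filter.Tendsto
      (fun n : ℕ => tail F0 (2 * Stmt19Aux.aa a α n - 1) / tail F0 (2 * Stmt19Aux.aa a α n))
      Filter.atTop (nhds 1) := h1t.comp hseq
  have := tendsto_nhds_unique hcomp hp2
  norm_num at this
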